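/- Let n ≥ 3. For every regular n-gon with center c, circumradius R > 0 and orientation θ, and every point M in its plane with L = |M − c|, one has S_n^{(4)} − (S_n^{(2)})² = 2R²L² ≥ 0; in particular S_n^{(4)} ≥ (S_n^{(2)})², with equality if and only if M = c. -/

import Mathlib

open Complex Real Finset

private lemma geom_sum_zero' (z : ℂ) (n : ℕ) (h1 : z ≠ 1) (h2 : z ^ n = 1) :
    ∑ k ∈ Finset.range n, z ^ k = 0 := by
  rw [geom_sum_eq h1, h2, sub_self, zero_div]

theorem S4_sub_S2_sq (n : ℕ) (hn : 3 ≤ n)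
    (c M : ℂ) (R θ : ℝ) (hR : 0 < R) (L : ℝ) (hL : L = ‖M - c‖)
    (S2 S4 : ℝ)
    (hS2 : S2 = (1 / n : ℝ) * ∑ k ∈ Finset.range n,
        (‖M - (c + R * Complex.exp (Complex.I * ((2 * π * k / n + θ : ℝ) : ℂ)))‖) ^ 2)
    (hS4 : S4 = (1 / n : ℝ) * ∑ k ∈ Finset.range n,
        (‖M - (c + R * Complex.exp (Complex.I * ((2 * π * k / n + θ : ℝ) : ℂ)))‖) ^ 4) :
    S4 - S2 ^ 2 = 2 * R ^ 2 * L ^ 2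
      ∧ 0 ≤ 2 * R ^ 2 * L ^ 2
      ∧ S2 ^ 2 ≤ S4
      ∧ (S4 = S2 ^ 2 ↔ M = c) := by
  have hnR : (n : ℝ) ≠ 0 := by positivity
  have hnC : (n : ℂ) ≠ 0 := by exact_mod_cast hnR
  set ω : ℂ := Complex.exp (2 * π * Complex.I / n) with hωdef
  set u : ℂ := Complex.exp ((θ : ℂ) * Complex.I) with hudef
  set w : ℂ := M - c with hwdef
  have hprim : IsPrimitiveRoot ω n := Complex.isPrimitiveRoot_exp n (by omega)
  have hω1 : ω ≠ 1 := hprim.ne_one (by omega)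
  have hωn : ω ^ n = 1 := hprim.pow_eq_one
  have hsum1 : ∑ k ∈ Finset.range n, ω ^ k = 0 := geom_sum_zero' ω n hω1 hωn
  have hω2 : ω ^ 2 ≠ 1 := by
    intro h
    have h2 := (IsPrimitiveRoot.pow_eq_one_iff_dvd hprim 2).mp h
    have := Nat.le_of_dvd (by norm_num) h2
    omega
  have hsum2 : ∑ k ∈ Finset.range n, (ω ^ 2) ^ k = 0 :=
    geom_sum_zero' _ n hω2 (by rw [← pow_mul, mul_comm, pow_mul, hωn, one_pow])
  have hsumc1 : ∑ k ∈ Finset.range n, ((starRingEnd ℂ) ω) ^ k = 0 := by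
    have := congrArg (starRingEnd ℂ) hsum1
    simpa [map_sum] using this
  have hsumc2 : ∑ k ∈ Finset.range n, (((starRingEnd ℂ) ω) ^ 2) ^ k = 0 := by
    have := congrArg (starRingEnd ℂ) hsum2
    simpa [map_sum] using this
  -- unit modulus facts
  have hu1 : u * (starRingEnd ℂ) u = 1 := by
    rw [Complex.mul_conj]
    norm_cast
    simp [hudef, Complex.normSq_eq_norm_sq, Complex.norm_exp]
  have hω1' : ω * (starRingEnd ℂ) ω = 1 := by
    rw [Complex.mul_conj]
    norm_cast
    simp [hωdef, Complex.normSq_eq_norm_sq, Complex.norm_exp]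
  have hωk : ∀ k : ℕ, ω ^ k * ((starRingEnd ℂ) ω) ^ k = 1 := by
    intro k; rw [← mul_pow, hω1', one_pow]
  -- rewrite the vertices
  have he : ∀ k : ℕ,
      Complex.exp (Complex.I * ((2 * π * k / n + θ : ℝ) : ℂ)) = u * ω ^ k := by
    intro k
    rw [hudef, ← Complex.exp_nat_mul, ← Complex.exp_add]
    congr 1
    push_cast
    field_simp
    ring
  have hv : ∀ k : ℕ,
      M - (c + R * Complex.exp (Complex.I * ((2 * π * k / n + θ : ℝ) : ℂ)))
        = w - R * (u * ω ^ k) := by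
    intro k; rw [he k, hwdef]; ring
  -- per-term quadratic identity (complex)
  have step2 : ∀ k ∈ Finset.range n,
      ((Complex.normSq (w - R * (u * ω ^ k)) : ℝ) : ℂ)
        = (w * (starRingEnd ℂ) w + (R:ℂ)^2)
          - ((R:ℂ) * w * (starRingEnd ℂ) u) * ((starRingEnd ℂ) ω) ^ k
          - ((R:ℂ) * (starRingEnd ℂ) w * u) * ω ^ k := by
    intro k _
    rw [← Complex.mul_conj]
    simp only [map_sub, map_mul, map_pow, Complex.conj_ofReal]
    linear_combination (R:ℂ)^2 * u * (starRingEnd ℂ) u * (hωk k) + (R:ℂ)^2 * hu1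
  -- per-term quartic identity (complex)
  have step4 : ∀ k ∈ Finset.range n,
      (((Complex.normSq (w - R * (u * ω ^ k)) : ℝ) : ℂ))^2
        = ((w * (starRingEnd ℂ) w + (R:ℂ)^2)^2 + 2 * (R:ℂ)^2 * (w * (starRingEnd ℂ) w))
          + ((R:ℂ)^2 * w^2 * ((starRingEnd ℂ) u)^2) * (((starRingEnd ℂ) ω)^2) ^ k
          + ((R:ℂ)^2 * ((starRingEnd ℂ) w)^2 * u^2) * (ω^2) ^ k
          - (2 * (w * (starRingEnd ℂ) w + (R:ℂ)^2) * (R:ℂ) * w * (starRingEnd ℂ) u)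
              * ((starRingEnd ℂ) ω) ^ k
          - (2 * (w * (starRingEnd ℂ) w + (R:ℂ)^2) * (R:ℂ) * (starRingEnd ℂ) w * u)
              * ω ^ k := by
    intro k hk
    have h2 := step2 k hk
    rw [h2]
    have hpq : ((R:ℂ) * w * (starRingEnd ℂ) u * ((starRingEnd ℂ) ω) ^ k)
        * ((R:ℂ) * (starRingEnd ℂ) w * u * ω ^ k)
        = (R:ℂ)^2 * (w * (starRingEnd ℂ) w) := by
      linear_combination (R:ℂ)^2 * w * (starRingEnd ℂ) w * u * (starRingEnd ℂ) u * (hωk k)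
        + (R:ℂ)^2 * w * (starRingEnd ℂ) w * hu1
    linear_combination 2 * hpq
  -- summed identities (complex)
  have key2C : ((∑ k ∈ Finset.range n, Complex.normSq (w - R * (u * ω ^ k)) : ℝ) : ℂ)
      = (n : ℂ) * (w * (starRingEnd ℂ) w + (R:ℂ)^2) := by
    push_cast
    rw [Finset.sum_congr rfl step2]
    rw [Finset.sum_sub_distrib, Finset.sum_sub_distrib, ← Finset.mul_sum, ← Finset.mul_sum,
      hsum1, hsumc1, Finset.sum_const, Finset.card_range]
    simp only [nsmul_eq_mul, mul_zero, sub_zero]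
  have key4C : ((∑ k ∈ Finset.range n, (Complex.normSq (w - R * (u * ω ^ k)))^2 : ℝ) : ℂ)
      = (n : ℂ) * ((w * (starRingEnd ℂ) w + (R:ℂ)^2)^2 + 2 * (R:ℂ)^2 * (w * (starRingEnd ℂ) w)) := by
    push_cast
    rw [Finset.sum_congr rfl step4]
    rw [Finset.sum_sub_distrib, Finset.sum_sub_distrib, Finset.sum_add_distrib,
      Finset.sum_add_distrib, ← Finset.mul_sum, ← Finset.mul_sum, ← Finset.mul_sum,
      ← Finset.mul_sum, hsum1, hsumc1, hsum2, hsumc2, Finset.sum_const, Finset.card_range]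
    simp only [nsmul_eq_mul, mul_zero, sub_zero, add_zero]
  -- convert to real identities with L
  have hL2 : L ^ 2 = Complex.normSq w := by
    rw [hL]
    exact Complex.sq_norm w
  have hwwbar : w * (starRingEnd ℂ) w = ((L^2 : ℝ) : ℂ) := by
    rw [Complex.mul_conj, hL2]
  have key2 : ∑ k ∈ Finset.range n, Complex.normSq (w - R * (u * ω ^ k))
      = n * (L^2 + R^2) := by
    have : ((∑ k ∈ Finset.range n, Complex.normSq (w - R * (u * ω ^ k)) : ℝ) : ℂ)
        = (((n : ℝ) * (L^2 + R^2) : ℝ) : ℂ) := by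
      rw [key2C, hwwbar]; push_cast; ring
    exact_mod_cast this
  have key4 : ∑ k ∈ Finset.range n, (Complex.normSq (w - R * (u * ω ^ k)))^2
      = n * ((L^2 + R^2)^2 + 2 * R^2 * L^2) := by
    have : ((∑ k ∈ Finset.range n, (Complex.normSq (w - R * (u * ω ^ k)))^2 : ℝ) : ℂ)
        = (((n : ℝ) * ((L^2 + R^2)^2 + 2 * R^2 * L^2) : ℝ) : ℂ) := by
      rw [key4C, hwwbar]; push_cast; ring
    exact_mod_cast this
  -- compute S2 and S4
  have hS2' : S2 = L^2 + R^2 := by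
    rw [hS2]
    have : ∀ k ∈ Finset.range n,
        (‖M - (c + R * Complex.exp (Complex.I * ((2 * π * k / n + θ : ℝ) : ℂ)))‖) ^ 2
          = Complex.normSq (w - R * (u * ω ^ k)) := by
      intro k _; rw [hv k, Complex.sq_norm]
    rw [Finset.sum_congr rfl this, key2]
    field_simp
  have hS4' : S4 = (L^2 + R^2)^2 + 2 * R^2 * L^2 := by
    rw [hS4]
    have : ∀ k ∈ Finset.range n,
        (‖M - (c + R * Complex.exp (Complex.I * ((2 * π * k / n + θ : ℝ) : ℂ)))‖) ^ 4
          = (Complex.normSq (w - R * (u * ω ^ k)))^2 := by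
      intro k _
      rw [hv k, show (4:ℕ) = 2*2 from rfl, pow_mul, Complex.sq_norm]
    rw [Finset.sum_congr rfl this, key4]
    field_simp
  have hmain : S4 - S2 ^ 2 = 2 * R ^ 2 * L ^ 2 := by
    rw [hS2', hS4']; ring
  have hL0 : 0 ≤ L := by rw [hL]; positivity
  refine ⟨hmain, by positivity, by nlinarith, ?_⟩
  constructor
  · intro h
    have hR2 : 0 < R ^ 2 := by positivity
    have hL2z : L ^ 2 = 0 := by nlinarith
    have hLz : L = 0 := pow_eq_zero_iff two_ne_zero |>.mp hL2z
    have h0 : ‖w‖ = 0 := by rw [← hL]; exact hLz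
    have hw0 : w = 0 := norm_eq_zero.mp h0
    rw [hwdef] at hw0
    exact sub_eq_zero.mp hw0
  · intro h
    have hLz : L = 0 := by
      have : w = 0 := by rw [hwdef, h, sub_self]
      rw [hL, this, norm_zero]
    rw [hS2', hS4', hLz]
    ring
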